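/- For the complete graph K_n on n ≥ 1 vertices, a nonempty set S of vertices is a strong defensive alliance (necessarily with connected induced subgraph) if and only if |S| ≥ ⌈(n+1)/2⌉. Consequently a_k(K_n) = C(n, k) for ⌈(n+1)/2⌉ ≤ k ≤ n and a_k(K_n) = 0 for 1 ≤ k < ⌈(n+1)/2⌉; that is, a(K_n; x) = Σ_{k=⌈(n+1)/2⌉}^{n} C(n,k) x^k. -/

import Mathlib

open SimpleGraph Polynomial Finset

/-- `δ_S(v)`: the number of neighbors of `v` lying in the set `S`. -/
noncomputable def degIn {V : Type*} (G : SimpleGraph V) (S : Finset V) (v : V) : ℕ :=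
  ((S : Set V) ∩ G.neighborSet v).ncard

/-- `δ(v)`: the degree of `v` in `G`. -/
noncomputable def degOf {V : Type*} (G : SimpleGraph V) (v : V) : ℕ :=
  (G.neighborSet v).ncard

/-- `S` is a strong defensive alliance in `G`: `S` is nonempty and every `v ∈ S`
satisfies `2·δ_S(v) ≥ δ(v)`. -/
def IsStrongAlliance {V : Type*} (G : SimpleGraph V) (S : Finset V) : Prop :=
  S.Nonempty ∧ ∀ v ∈ S, degOf G v ≤ 2 * degIn G S v

/-- The alliances counted by the strong alliance polynomial: strong defensive alliances
whose induced subgraph is connected. -/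
def IsCountedAlliance {V : Type*} (G : SimpleGraph V) (S : Finset V) : Prop :=
  IsStrongAlliance G S ∧ (G.induce (S : Set V)).Connected

/-- `a_k(G)`: the number of strong defensive alliances of cardinality `k` in `G`
whose induced subgraph is connected. -/
noncomputable def aCoeff {V : Type*} (G : SimpleGraph V) (k : ℕ) : ℕ :=
  {S : Finset V | S.card = k ∧ IsCountedAlliance G S}.ncard

/-- The strong alliance polynomial `a(G;x) = Σ_k a_k(G) x^k`. -/
noncomputable def alliancePoly {V : Type*} [Fintype V] (G : SimpleGraph V) : Polynomial ℤ :=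
  ∑ k ∈ Finset.range (Fintype.card V + 1), Polynomial.C (aCoeff G k : ℤ) * Polynomial.X ^ k

lemma degOf_top (n : ℕ) (v : Fin n) : degOf (⊤ : SimpleGraph (Fin n)) v = n - 1 := by
  unfold degOf
  simp only [Set.ncard_eq_toFinset_card']
  rw [show ((⊤ : SimpleGraph (Fin n)).neighborSet v).toFinset
      = Finset.univ.erase v by ext w; simp [ne_comm]]
  rw [Finset.card_erase_of_mem (Finset.mem_univ v), Finset.card_univ, Fintype.card_fin]

lemma degIn_top (n : ℕ) (S : Finset (Fin n)) (v : Fin n) (hv : v ∈ S) :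
    degIn (⊤ : SimpleGraph (Fin n)) S v = S.card - 1 := by
  unfold degIn
  have : (S : Set (Fin n)) ∩ (⊤ : SimpleGraph (Fin n)).neighborSet v = ↑(S.erase v) := by
    ext w; simp [Set.mem_inter_iff, and_comm, ne_comm]
  rw [this, Set.ncard_coe_finset, Finset.card_erase_of_mem hv]

lemma conn_top (n : ℕ) (S : Finset (Fin n)) (hS : S.Nonempty) :
    ((⊤ : SimpleGraph (Fin n)).induce (S : Set (Fin n))).Connected := by
  obtain ⟨v, hv⟩ := hS
  haveI : Nonempty (S : Set (Fin n)) := ⟨⟨v, hv⟩⟩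
  refine ⟨fun a b => ?_⟩
  by_cases h : a = b
  · exact h ▸ Reachable.refl a
  · exact SimpleGraph.Adj.reachable (show (⊤ : SimpleGraph (Fin n)).Adj a.1 b.1 from fun h' => h (Subtype.ext h'))

lemma counted_iff (n : ℕ) (hn : 1 ≤ n) (S : Finset (Fin n)) (hS : S.Nonempty) :
    IsCountedAlliance (⊤ : SimpleGraph (Fin n)) S ↔ (n + 2) / 2 ≤ S.card := by
  have hc1 : 1 ≤ S.card := Finset.card_pos.mpr hS
  constructor
  · rintro ⟨⟨-, h⟩, -⟩
    obtain ⟨v, hv⟩ := hS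
    have := h v hv
    rw [degOf_top, degIn_top n S v hv] at this
    omega
  · intro hk
    refine ⟨⟨hS, fun v hv => ?_⟩, conn_top n S hS⟩
    rw [degOf_top, degIn_top n S v hv]
    omega

lemma aCoeff_zero (n : ℕ) : aCoeff (⊤ : SimpleGraph (Fin n)) 0 = 0 := by
  have : {S : Finset (Fin n) | S.card = 0 ∧ IsCountedAlliance (⊤ : SimpleGraph (Fin n)) S}
      = ∅ := by
    ext S
    simp only [Set.mem_setOf_eq, Set.mem_empty_iff_false, iff_false, not_and]
    rintro h0 ⟨⟨hne, -⟩, -⟩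
    exact Finset.card_pos.mpr hne |>.ne' (by omega)
  rw [aCoeff, this, Set.ncard_empty]

lemma aCoeff_big (n : ℕ) (hn : 1 ≤ n) (k : ℕ) (hk : (n + 2) / 2 ≤ k) :
    aCoeff (⊤ : SimpleGraph (Fin n)) k = n.choose k := by
  have hk1 : 1 ≤ k := by omega
  have : {S : Finset (Fin n) | S.card = k ∧ IsCountedAlliance (⊤ : SimpleGraph (Fin n)) S}
      = ↑(Finset.univ.powersetCard k : Finset (Finset (Fin n))) := by
    ext S
    simp only [Set.mem_setOf_eq, Finset.mem_coe, Finset.mem_powersetCard_univ]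
    constructor
    · rintro ⟨h, -⟩; exact h
    · intro h
      have hS : S.Nonempty := Finset.card_pos.mp (by omega)
      exact ⟨h, (counted_iff n hn S hS).2 (by omega)⟩
  rw [aCoeff, this, Set.ncard_coe_finset, Finset.card_powersetCard, Finset.card_univ,
    Fintype.card_fin]

lemma aCoeff_small (n : ℕ) (hn : 1 ≤ n) (k : ℕ) (hk1 : 1 ≤ k) (hk : k < (n + 2) / 2) :
    aCoeff (⊤ : SimpleGraph (Fin n)) k = 0 := by
  have : {S : Finset (Fin n) | S.card = k ∧ IsCountedAlliance (⊤ : SimpleGraph (Fin n)) S}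
      = ∅ := by
    ext S
    simp only [Set.mem_setOf_eq, Set.mem_empty_iff_false, iff_false, not_and]
    intro hc hA
    have hS : S.Nonempty := Finset.card_pos.mp (by omega)
    have := (counted_iff n hn S hS).1 hA
    omega
  rw [aCoeff, this, Set.ncard_empty]

theorem stmt_10 (n : ℕ) (hn : 1 ≤ n) :
    (∀ S : Finset (Fin n), S.Nonempty →
      (IsCountedAlliance (⊤ : SimpleGraph (Fin n)) S ↔ (n + 2) / 2 ≤ S.card)) ∧
    (∀ k : ℕ, (n + 2) / 2 ≤ k → k ≤ n →
      aCoeff (⊤ : SimpleGraph (Fin n)) k = n.choose k) ∧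
    (∀ k : ℕ, 1 ≤ k → k < (n + 2) / 2 → aCoeff (⊤ : SimpleGraph (Fin n)) k = 0) ∧
    alliancePoly (⊤ : SimpleGraph (Fin n)) =
      ∑ k ∈ Finset.Icc ((n + 2) / 2) n, Polynomial.C ((n.choose k : ℕ) : ℤ)
        * Polynomial.X ^ k := by
  refine ⟨fun S hS => counted_iff n hn S hS,
    fun k hk _ => aCoeff_big n hn k hk,
    fun k hk1 hk2 => aCoeff_small n hn k hk1 hk2, ?_⟩
  rw [alliancePoly, Fintype.card_fin]
  rw [show (Finset.range (n + 1)) = Finset.Icc 0 n by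
    ext k; simp [Nat.lt_succ_iff]]
  rw [← Finset.sum_subset (Finset.Icc_subset_Icc_left (Nat.zero_le _))
    (fun k hk hk2 => ?_)]
  · exact Finset.sum_congr rfl fun k hk => by
      rw [aCoeff_big n hn k (Finset.mem_Icc.mp hk).1]
  · simp only [Finset.mem_Icc] at hk hk2
    have hlt : k < (n + 2) / 2 := by omega
    rcases Nat.eq_zero_or_pos k with h | h
    · rw [h, aCoeff_zero]; simp
    · rw [aCoeff_small n hn k h hlt]; simp
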